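/- Let A be an algebra and let α, β be congruences of A. Then there is a least congruence γ of A with the property that whenever [[x,y],[u,v]] ∈ M(α,β) and (x,y) ∈ γ, then (u,v) ∈ γ; moreover this least congruence equals the commutator [α,β] defined via the term condition. -/

import Mathlib

open FirstOrder FirstOrder.Language FirstOrder.Language.Structure

/-- A congruence on an `L`-structure: an equivalence relation preserved by every
basic operation. -/
def IsCong (L : FirstOrder.Language) (A : Type*) [L.Structure A] (r : A → A → Prop) : Prop :=
  Equivalence r ∧ ∀ (n : ℕ) (f : L.Functions n) (x y : Fin n → A),
    (∀ i, r (x i) (y i)) → r (funMap f x) (funMap f y)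

/-- The congruence generated by a set of pairs: the intersection of all congruences
containing the set. -/
def cgSet (L : FirstOrder.Language) (A : Type*) [L.Structure A] (s : Set (A × A)) :
    A → A → Prop :=
  fun x y => ∀ r : A → A → Prop, IsCong L A r → (∀ p ∈ s, r p.1 p.2) → r x y

/-- `Cg^A(a,b)`: the least congruence containing `(a,b)`. -/
def cgPair (L : FirstOrder.Language) (A : Type*) [L.Structure A] (a b : A) : A → A → Prop :=
  cgSet L A {(a, b)}

/-- The term condition `C(α,β;δ)`. -/
def TermCond (L : FirstOrder.Language) (A : Type*) [L.Structure A]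
    (α β δ : A → A → Prop) : Prop :=
  ∀ (n : ℕ) (t : L.Term (Fin (n + 1))) (a a' : A), α a a' →
    ∀ u v : Fin n → A, (∀ i, β (u i) (v i)) →
      δ (t.realize (Fin.cons a u)) (t.realize (Fin.cons a v)) →
      δ (t.realize (Fin.cons a' u)) (t.realize (Fin.cons a' v))

/-- The commutator `[α,β]`: the least congruence `δ` such that `C(α,β;δ)` holds
(the intersection of all such `δ`). -/
def commut (L : FirstOrder.Language) (A : Type*) [L.Structure A] (α β : A → A → Prop) :
    A → A → Prop :=
  fun x y => ∀ δ : A → A → Prop, IsCong L A δ → TermCond L A α β δ → δ x y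

/-- An algebra is idempotent if every basic operation satisfies `f(a,…,a) = a`. -/
def IsIdem (L : FirstOrder.Language) (A : Type*) [L.Structure A] : Prop :=
  ∀ (n : ℕ) (f : L.Functions n) (a : A), funMap f (fun _ => a) = a

/-- A ternary term `d` is a difference term operation for `A` if `d(a,a,b) = b` and
`(a, d(a,b,b)) ∈ [θ,θ]` where `θ = Cg^A(a,b)`. -/
def IsDTO (L : FirstOrder.Language) (A : Type*) [L.Structure A] (d : L.Term (Fin 3)) : Prop :=
  ∀ a b : A, d.realize ![a, a, b] = b ∧
    commut L A (cgPair L A a b) (cgPair L A a b) a (d.realize ![a, b, b])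

/-- A local difference term operation for a triple `(a, b, i) ∈ A² × {0,1}`
(`i = 1` is encoded as `true`). -/
def IsLDTO (L : FirstOrder.Language) (A : Type*) [L.Structure A] (t : L.Term (Fin 3))
    (s : A × A × Bool) : Prop :=
  if s.2.2 then t.realize ![s.1, s.1, s.2.1] = s.2.1
  else commut L A (cgPair L A s.1 s.2.1) (cgPair L A s.1 s.2.1) s.1
    (t.realize ![s.1, s.2.1, s.2.1])

/-- The coordinatewise `L`-structure on a product. -/
def prodStructure (L : FirstOrder.Language) (A B : Type*) [L.Structure A] [L.Structure B] :
    L.Structure (A × B) where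
  funMap f x := (funMap f fun i => (x i).1, funMap f fun i => (x i).2)
  RelMap r x := RelMap r (fun i => (x i).1) ∧ RelMap r (fun i => (x i).2)

/-- The quotient structure on `Quotient s` induced by the structure on `A`. -/
noncomputable def quotStructure (L : FirstOrder.Language) (A : Type*) [L.Structure A] (s : Setoid A) :
    L.Structure (Quotient s) where
  funMap f x := ⟦funMap f fun i => (x i).out⟧
  RelMap r x := RelMap r fun i => (x i).out

/-- Generators of `M(α,β)`: the matrices `[[a,a],[a',a']]` with `(a,a') ∈ α` together with
the matrices `[[b,b'],[b,b']]` with `(b,b') ∈ β`; a matrix `[[x,y],[u,v]]` is encoded as its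
pair of rows `((x,y),(u,v))`. -/
def matGens (A : Type*) (α β : A → A → Prop) : Set ((A × A) × (A × A)) :=
  {m | (∃ x y, α x y ∧ m = ((x, x), (y, y))) ∨ ∃ x y, β x y ∧ m = ((x, y), (x, y))}

/-- `M(α,β)`: the subalgebra of `A⁴` (with the coordinatewise structure) generated
by `matGens A α β`. -/
def Mset (L : FirstOrder.Language) (A : Type*) [L.Structure A] (α β : A → A → Prop) :
    Set ((A × A) × (A × A)) :=
  letI : L.Structure (A × A) := prodStructure L A A
  letI : L.Structure ((A × A) × (A × A)) := prodStructure L (A × A) (A × A)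
  (Substructure.closure L (matGens A α β) : Set ((A × A) × (A × A)))

lemma keyTC {L : FirstOrder.Language} {A : Type*} [L.Structure A]
    {α β δ : A → A → Prop} (hβ : IsCong L A β) (htc : TermCond L A α β δ)
    {n : ℕ} (t : L.Term (Fin n)) (c d c' d' : Fin n → A)
    (h : ∀ i, (c i = d i ∧ c' i = d' i ∧ α (c i) (c' i)) ∨
      (c i = c' i ∧ d i = d' i ∧ β (c i) (d i)))
    (h0 : δ (t.realize c) (t.realize d)) : δ (t.realize c') (t.realize d') := by
  classical
  have hcol : ∀ (s : Finset (Fin n)) (i : Fin n),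
      β (if i ∈ s then c' i else c i) (if i ∈ s then d' i else d i) := by
    intro s i
    rcases h i with ⟨h1, h2, _⟩ | ⟨h1, h2, h3⟩
    · by_cases hi : i ∈ s <;> simp only [hi, if_true, if_false]
      · rw [h2]; exact hβ.1.refl _
      · rw [h1]; exact hβ.1.refl _
    · by_cases hi : i ∈ s <;> simp only [hi, if_true, if_false]
      · rw [← h1, ← h2]; exact h3
      · exact h3
  have main : ∀ s : Finset (Fin n),
      δ (t.realize fun i => if i ∈ s then c' i else c i)
        (t.realize fun i => if i ∈ s then d' i else d i) := by
    intro s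
    induction s using Finset.induction_on with
    | empty => simpa using h0
    | @insert j s hj ih =>
      rcases h j with ⟨e1, e2, ha⟩ | ⟨e1, e2, _⟩
      · -- α-type coordinate
        set u : Fin n → A := fun i => if i ∈ s then c' i else c i with hu
        set w : Fin n → A := fun i => if i ∈ s then d' i else d i with hw
        have hrel : ∀ (x : A) (z : Fin n → A),
            (t.relabel fun i => if i = j then (0 : Fin (n+1)) else i.succ).realize
              (Fin.cons x z) = t.realize fun i => if i = j then x else z i := by
          intro x z
          rw [Term.realize_relabel]
          congr 1
          funext i
          by_cases hij : i = j <;> simp [Function.comp, hij]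
        have h1 : δ ((t.relabel fun i => if i = j then (0 : Fin (n+1)) else i.succ).realize
              (Fin.cons (c j) u))
            ((t.relabel fun i => if i = j then (0 : Fin (n+1)) else i.succ).realize
              (Fin.cons (c j) w)) := by
          rw [hrel, hrel]
          have e3 : (fun i => if i = j then c j else u i) = u := by
            funext i; by_cases hij : i = j
            · subst hij; simp [hu, hj]
            · simp [hij]
          have e4 : (fun i => if i = j then c j else w i) = w := by
            funext i; by_cases hij : i = j
            · subst hij; simp [hw, hj, ← e1]
            · simp [hij]
          rw [e3, e4]; exact ih
        have h2 := htc n _ (c j) (c' j) ha u w (hcol s) h1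
        rw [hrel, hrel] at h2
        have e3 : (fun i => if i = j then c' j else u i)
            = fun i => if i ∈ insert j s then c' i else c i := by
          funext i; by_cases hij : i = j
          · subst hij; simp
          · simp [hij, hu, Finset.mem_insert]
        have e4 : (fun i => if i = j then c' j else w i)
            = fun i => if i ∈ insert j s then d' i else d i := by
          funext i; by_cases hij : i = j
          · subst hij; simp [← e2]
          · simp [hij, hw, Finset.mem_insert]
        rw [e3, e4] at h2; exact h2
      · -- β-type coordinate: update is trivial
        have e3 : (fun i => if i ∈ insert j s then c' i else c i)
            = fun i => if i ∈ s then c' i else c i := by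
          funext i; by_cases hij : i = j
          · subst hij; simp [hj, ← e1]
          · simp [hij, Finset.mem_insert]
        have e4 : (fun i => if i ∈ insert j s then d' i else d i)
            = fun i => if i ∈ s then d' i else d i := by
          funext i; by_cases hij : i = j
          · subst hij; simp [hj, ← e2]
          · simp [hij, Finset.mem_insert]
        rw [e3, e4]; exact ih
  have := main Finset.univ
  simpa using this

lemma prod_realize {L : FirstOrder.Language} {B C : Type*} [L.Structure B] [L.Structure C]
    {γ : Type*} (t : L.Term γ) (v : γ → B × C) :
    @Term.realize L (B × C) (prodStructure L B C) γ v t =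
      (t.realize fun i => (v i).1, t.realize fun i => (v i).2) := by
  induction t with
  | var => rfl
  | func f ts ih =>
    show (prodStructure L B C).funMap f _ = _
    simp only [prodStructure, Term.realize, ih]
    rfl

lemma mem_Mset_elim {L : FirstOrder.Language} {A : Type*} [L.Structure A]
    (α β : A → A → Prop) {x y u v : A}
    (hm : ((x, y), (u, v)) ∈ Mset L A α β) :
    ∃ (n : ℕ) (t : L.Term (Fin n)) (c d c' d' : Fin n → A),
      (∀ i, (c i = d i ∧ c' i = d' i ∧ α (c i) (c' i)) ∨
        (c i = c' i ∧ d i = d' i ∧ β (c i) (d i))) ∧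
      x = t.realize c ∧ y = t.realize d ∧ u = t.realize c' ∧ v = t.realize d' := by
  classical
  letI i1 : L.Structure (A × A) := prodStructure L A A
  letI i2 : L.Structure ((A × A) × (A × A)) := prodStructure L (A × A) (A × A)
  have hm' : ((x, y), (u, v)) ∈ Substructure.closure L (matGens A α β) := hm
  rw [Substructure.mem_closure_iff_exists_term] at hm'
  obtain ⟨t, ht⟩ := hm'
  -- restrict to the finitely many variables occurring in t
  have hsub : ↑t.varFinset ⊆ (↑t.varFinset : Set (matGens A α β)) := Set.Subset.rfl
  have hres := Term.realize_restrictVar' (M := (A × A) × (A × A)) hsub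
    (v := (Subtype.val : (matGens A α β) → (A × A) × (A × A)))
  haveI : Fintype ↥(↑t.varFinset : Set (matGens A α β)) :=
    Set.Finite.fintype t.varFinset.finite_toSet
  set e := Fintype.equivFin ↥(↑t.varFinset : Set (matGens A α β)) with he
  set n := Fintype.card ↥(↑t.varFinset : Set (matGens A α β)) with hn
  set t2 := (t.restrictVar (Set.inclusion hsub)).relabel e with ht2
  set w : Fin n → (A × A) × (A × A) := fun k => ((e.symm k : (matGens A α β)) : _) with hww
  have hw : ∀ k, w k ∈ matGens A α β := fun k => ((e.symm k : (matGens A α β))).2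
  have hreal : t2.realize w = ((x, y), (u, v)) := by
    rw [ht2, Term.realize_relabel]
    have : w ∘ e = (Subtype.val : (matGens A α β) → _) ∘ Subtype.val := by
      funext p; simp [hww]
    rw [this, hres, ht]
  refine ⟨n, t2, (fun k => (w k).1.1), (fun k => (w k).1.2), (fun k => (w k).2.1),
    (fun k => (w k).2.2), ?_, ?_, ?_, ?_, ?_⟩
  · intro k
    rcases hw k with ⟨p, q, hpq, heq⟩ | ⟨p, q, hpq, heq⟩
    · left; simp [heq, hpq]
    · right; simp [heq, hpq]
  all_goals {
    have h1 := prod_realize (L := L) t2 w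
    have h2 := prod_realize (L := L) t2 (fun i => (w i).1)
    have h3 := prod_realize (L := L) t2 (fun i => (w i).2)
    rw [hreal, h2, h3] at h1
    simp only [Prod.mk.injEq] at h1
    obtain ⟨⟨a1, a2⟩, a3, a4⟩ := h1
    first | exact a1 | exact a2 | exact a3 | exact a4 }

lemma matrix_mem_Mset {L : FirstOrder.Language} {A : Type*} [L.Structure A]
    (α β : A → A → Prop) {n : ℕ} (t : L.Term (Fin (n + 1))) (a a' : A) (haa : α a a')
    (u v : Fin n → A) (huv : ∀ i, β (u i) (v i)) :
    ((t.realize (Fin.cons a u), t.realize (Fin.cons a v)),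
      (t.realize (Fin.cons a' u), t.realize (Fin.cons a' v))) ∈ Mset L A α β := by
  letI i1 : L.Structure (A × A) := prodStructure L A A
  letI i2 : L.Structure ((A × A) × (A × A)) := prodStructure L (A × A) (A × A)
  set P : Fin (n + 1) → (A × A) × (A × A) :=
    Fin.cons ((a, a), (a', a')) (fun i => ((u i, v i), (u i, v i))) with hP
  have hPg : ∀ i, P i ∈ matGens A α β := by
    intro i
    refine Fin.cases ?_ ?_ i
    · left; exact ⟨a, a', haa, rfl⟩
    · intro i; right; exact ⟨u i, v i, huv i, rfl⟩
  have hmem : Term.realize P t ∈ Substructure.closure L (matGens A α β) :=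
    t.realize_mem P fun i => Substructure.subset_closure (hPg i)
  have h1 := prod_realize (L := L) t P
  have h2 := prod_realize (L := L) t (fun i => (P i).1)
  have h3 := prod_realize (L := L) t (fun i => (P i).2)
  rw [h2, h3] at h1
  have c1 : (fun i => (P i).1.1) = Fin.cons a u :=
    funext fun i => Fin.cases rfl (fun _ => rfl) i
  have c2 : (fun i => (P i).1.2) = Fin.cons a v :=
    funext fun i => Fin.cases rfl (fun _ => rfl) i
  have c3 : (fun i => (P i).2.1) = Fin.cons a' u :=
    funext fun i => Fin.cases rfl (fun _ => rfl) i
  have c4 : (fun i => (P i).2.2) = Fin.cons a' v :=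
    funext fun i => Fin.cases rfl (fun _ => rfl) i
  rw [c1, c2, c3, c4] at h1
  rw [h1] at hmem
  exact hmem

theorem stmt10 {L : FirstOrder.Language} [L.IsAlgebraic] (A : Type*) [L.Structure A]
    (α β : A → A → Prop) (hα : IsCong L A α) (hβ : IsCong L A β) :
    IsCong L A (commut L A α β) ∧
      (∀ x y u v : A, ((x, y), (u, v)) ∈ Mset L A α β →
        commut L A α β x y → commut L A α β u v) ∧
      (∀ γ : A → A → Prop, IsCong L A γ →
        (∀ x y u v : A, ((x, y), (u, v)) ∈ Mset L A α β → γ x y → γ u v) →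
        ∀ x y : A, commut L A α β x y → γ x y) := by
  constructor
  · constructor
    · exact ⟨fun x δ hδ _ => hδ.1.refl x,
        fun h δ hδ ht => hδ.1.symm (h δ hδ ht),
        fun h1 h2 δ hδ ht => hδ.1.trans (h1 δ hδ ht) (h2 δ hδ ht)⟩
    · exact fun n f x y hxy δ hδ ht => hδ.2 n f x y (fun i => hxy i δ hδ ht)
  constructor
  · intro x y u v hm hxy δ hδ ht
    obtain ⟨n, t, c, d, c', d', hcond, hx, hy, hu, hv⟩ := mem_Mset_elim α β hm
    rw [hu, hv]
    exact keyTC hβ ht t c d c' d' hcond (by rw [← hx, ← hy]; exact hxy δ hδ ht)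
  · intro γ hγ hM x y hxy
    refine hxy γ hγ ?_
    intro n t a a' haa u v huv hγt
    exact hM _ _ _ _ (matrix_mem_Mset α β t a a' haa u v huv) hγt
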